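/- Let f(z,w) = (p(z), q(z,w)) with p(z) = z^δ(1+ζ(z)) and q(z,w) = b z^γ w (1+η(z,w)), b ≠ 0 (i.e., d = 1), in Case 4 with T_k < δ < T_{k-1}, so that γ̃ = γ + l_1·1 - l_1·δ > 0 and δ > d̃ = l_2^{-1}γ̃ + 1 > 1. Suppose |ζ|, |η| are small on U_r. Then f^n(U_r) ⊆ U_{r/2^n} for all n ≥ 0 and all sufficiently small r, where U_ρ = {ρ^{-l_2}|z|^{l_1+l_2} < |w| < ρ|z|^{l_1}}. -/

import Mathlib

/-- The wedge U_ρ = { ρ^{-l₂}|z|^{l₁+l₂} < |w| < ρ|z|^{l₁} }. -/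
def inWedge (l1 l2 ρ : ℝ) (p : ℂ × ℂ) : Prop :=
  ρ ^ (-l2) * ‖p.1‖ ^ (l1 + l2) < ‖p.2‖ ∧ ‖p.2‖ < ρ * ‖p.1‖ ^ l1

set_option maxHeartbeats 1000000 in
/-- let f(z,w) = (z^δ(1 + ζ(z)), b z^γ w (1 + η(z,w))) with b ≠ 0
(the case d = 1), in Case 4 with T_k < δ < T_{k-1}, so that γ̃ = γ + l₁·1 - l₁δ > 0 and
δ > d̃ = l₂⁻¹γ̃ + 1 > 1 (equivalently δ - l₂⁻¹γ̃ > 1 and l₂⁻¹(δ - d̃) > 0). If |ζ| and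
|η| are sufficiently small on the wedge, then fⁿ(U_r) ⊆ U_{r/2ⁿ} for all n ≥ 0 and all
sufficiently small r > 0. -/
theorem stmt19
    (δ γ : ℕ) (hδ : 2 ≤ δ) (hγ : 1 ≤ γ) (b : ℂ) (hb : b ≠ 0)
    (l1 l2 : ℝ) (hl1 : 0 < l1) (hl2 : 0 < l2)
    (γt dt : ℝ) (hγt : γt = (γ : ℝ) + l1 * 1 - l1 * δ) (hdt : dt = l2⁻¹ * γt + 1)
    (h1 : 1 < (δ : ℝ) - l2⁻¹ * γt) (h2 : 0 < l2⁻¹ * ((δ : ℝ) - dt))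
    (h3 : 0 < γt) (h4 : 1 < dt) :
    ∃ ε0 > 0, ∀ (ζ : ℂ → ℂ) (η : ℂ × ℂ → ℂ) (r1 : ℝ), 0 < r1 →
      (∀ p : ℂ × ℂ, inWedge l1 l2 r1 p → ‖ζ p.1‖ ≤ ε0 ∧ ‖η p‖ ≤ ε0) →
      ∀ f : ℂ × ℂ → ℂ × ℂ,
        (∀ p, f p = (p.1 ^ δ * (1 + ζ p.1), b * p.1 ^ γ * p.2 * (1 + η p))) →
        ∃ r0, 0 < r0 ∧ r0 ≤ r1 ∧ ∀ r, 0 < r → r ≤ r0 → ∀ n : ℕ, ∀ p : ℂ × ℂ,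
          inWedge l1 l2 r p → inWedge l1 l2 (r / 2 ^ n) (f^[n] p) := by
  refine ⟨1/2, by norm_num, ?_⟩
  intro ζ η r1 hr1 hbound f hf
  have hnb : 0 < ‖b‖ := norm_pos_iff.mpr hb
  have hid1 : (γ : ℝ) + l1 = γt + (δ : ℝ) * l1 := by rw [hγt]; ring
  have he : 0 < (δ : ℝ) * (l1 + l2) - ((γ : ℝ) + l1 + l2) := by
    have hkey : l2 * 1 < l2 * ((δ : ℝ) - l2⁻¹ * γt) := mul_lt_mul_of_pos_left h1 hl2
    rw [mul_sub, mul_inv_cancel_left₀ hl2.ne', mul_one] at hkey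
    rw [hγt] at hkey
    nlinarith [hkey]
  set e : ℝ := (δ : ℝ) * (l1 + l2) - ((γ : ℝ) + l1 + l2) with hedef
  have hid2 : (δ : ℝ) * (l1 + l2) = e + ((γ : ℝ) + l1 + l2) := by rw [hedef]; ring
  set c1 : ℝ := (1/2 : ℝ) ^ (l1 + 1) / ((3/2) * ‖b‖) with hc1def
  set c2 : ℝ := ‖b‖ * (1/2) / ((2 : ℝ) ^ l2 * (3/2 : ℝ) ^ (l1 + l2)) with hc2def
  have hc1 : 0 < c1 :=
    div_pos (Real.rpow_pos_of_pos (by norm_num) _) (mul_pos (by norm_num) hnb)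
  have hc2 : 0 < c2 :=
    div_pos (mul_pos hnb (by norm_num))
      (mul_pos (Real.rpow_pos_of_pos (by norm_num) _) (Real.rpow_pos_of_pos (by norm_num) _))
  refine ⟨min r1 (min 1 (min (c1 ^ γt⁻¹) (c2 ^ e⁻¹))),
    lt_min hr1 (lt_min one_pos (lt_min (Real.rpow_pos_of_pos hc1 _) (Real.rpow_pos_of_pos hc2 _))),
    min_le_left _ _, ?_⟩
  set r0 := min r1 (min 1 (min (c1 ^ γt⁻¹) (c2 ^ e⁻¹))) with hr0def
  have hstep : ∀ r : ℝ, 0 < r → r ≤ r0 → ∀ p : ℂ × ℂ,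
      inWedge l1 l2 r p → inWedge l1 l2 (r/2) (f p) := by
    intro r hr hrr0 p hp
    obtain ⟨z, w⟩ := p
    simp only [inWedge] at hp ⊢
    obtain ⟨hlow, hup⟩ := hp
    have hy0 : (0:ℝ) ≤ ‖w‖ := norm_nonneg _
    have hxpos : 0 < ‖z‖ := by
      rcases (norm_nonneg z).lt_or_eq with h | h
      · exact h
      · exfalso
        rw [← h, Real.zero_rpow hl1.ne'] at hup
        linarith only [hy0, hup]
    have hr1' : r ≤ r1 := le_trans hrr0 (min_le_left _ _)
    have hrle1 : r ≤ 1 := le_trans hrr0 ((min_le_right _ _).trans (min_le_left _ _))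
    have hxl1 : 0 < ‖z‖ ^ l1 := Real.rpow_pos_of_pos hxpos _
    have hrl2 : 0 < r ^ l2 := Real.rpow_pos_of_pos hr _
    have hsplit : ‖z‖ ^ (l1 + l2) = ‖z‖ ^ l1 * ‖z‖ ^ l2 := Real.rpow_add hxpos _ _
    have hrneg : r ^ (-l2) = (r ^ l2)⁻¹ := Real.rpow_neg hr.le _
    have hxr : ‖z‖ < r := by
      have hch : r ^ (-l2) * ‖z‖ ^ (l1 + l2) < r * ‖z‖ ^ l1 := hlow.trans hup
      rw [hsplit, hrneg] at hch
      have h2' := mul_lt_mul_of_pos_left hch hrl2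
      rw [← mul_assoc, mul_inv_cancel₀ hrl2.ne', one_mul] at h2'
      have h3' : ‖z‖ ^ l2 * ‖z‖ ^ l1 < (r ^ l2 * r) * ‖z‖ ^ l1 := by linarith only [h2']
      have h4' : ‖z‖ ^ l2 < r ^ l2 * r := lt_of_mul_lt_mul_right h3' hxl1.le
      by_contra hcon
      push_neg at hcon
      have h5' : r ^ l2 ≤ ‖z‖ ^ l2 := Real.rpow_le_rpow hr.le hcon hl2.le
      have h6' : r ^ l2 * r ≤ r ^ l2 * 1 := mul_le_mul_of_nonneg_left hrle1 hrl2.le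
      linarith only [h4', h5', h6']
    have hxr0 : ‖z‖ ≤ r0 := hxr.le.trans hrr0
    have hxγt : ‖z‖ ^ γt ≤ c1 := by
      have hx1 : ‖z‖ ≤ c1 ^ γt⁻¹ :=
        hxr0.trans ((min_le_right _ _).trans ((min_le_right _ _).trans (min_le_left _ _)))
      calc ‖z‖ ^ γt ≤ (c1 ^ γt⁻¹) ^ γt := Real.rpow_le_rpow hxpos.le hx1 h3.le
        _ = c1 := by
            rw [← Real.rpow_mul hc1.le, inv_mul_cancel₀ h3.ne', Real.rpow_one]
    have hxe : ‖z‖ ^ e ≤ c2 := by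
      have hx1 : ‖z‖ ≤ c2 ^ e⁻¹ :=
        hxr0.trans ((min_le_right _ _).trans ((min_le_right _ _).trans (min_le_right _ _)))
      calc ‖z‖ ^ e ≤ (c2 ^ e⁻¹) ^ e := Real.rpow_le_rpow hxpos.le hx1 he.le
        _ = c2 := by
            rw [← Real.rpow_mul hc2.le, inv_mul_cancel₀ he.ne', Real.rpow_one]
    have hpr1 : inWedge l1 l2 r1 (z, w) := by
      simp only [inWedge]
      constructor
      · refine lt_of_le_of_lt ?_ hlow
        apply mul_le_mul_of_nonneg_right _ (Real.rpow_nonneg hxpos.le _)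
        rw [hrneg, Real.rpow_neg hr1.le]
        exact inv_anti₀ hrl2 (Real.rpow_le_rpow hr.le hr1' hl2.le)
      · exact hup.trans_le (mul_le_mul_of_nonneg_right hr1' hxl1.le)
    obtain ⟨hζb, hηb⟩ := hbound (z, w) hpr1
    simp only at hζb hηb
    have hu0 : (0:ℝ) ≤ ‖(1:ℂ) + ζ z‖ := norm_nonneg _
    have hv0 : (0:ℝ) ≤ ‖(1:ℂ) + η (z, w)‖ := norm_nonneg _
    have hu1 : ‖(1:ℂ) + ζ z‖ ≤ 3/2 := by
      calc ‖(1:ℂ) + ζ z‖ ≤ ‖(1:ℂ)‖ + ‖ζ z‖ := norm_add_le _ _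
        _ ≤ 3/2 := by rw [norm_one]; linarith only [hζb]
    have hu2 : (1/2 : ℝ) ≤ ‖(1:ℂ) + ζ z‖ := by
      have h := norm_sub_norm_le (1:ℂ) (-(ζ z))
      simp only [norm_one, norm_neg, sub_neg_eq_add] at h
      linarith only [h, hζb]
    have hv1 : ‖(1:ℂ) + η (z, w)‖ ≤ 3/2 := by
      calc ‖(1:ℂ) + η (z, w)‖ ≤ ‖(1:ℂ)‖ + ‖η (z, w)‖ := norm_add_le _ _
        _ ≤ 3/2 := by rw [norm_one]; linarith only [hηb]
    have hv2 : (1/2 : ℝ) ≤ ‖(1:ℂ) + η (z, w)‖ := by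
      have h := norm_sub_norm_le (1:ℂ) (-(η (z, w)))
      simp only [norm_one, norm_neg, sub_neg_eq_add] at h
      linarith only [h, hηb]
    rw [hf (z, w)]
    simp only
    have hn1 : ‖z ^ δ * (1 + ζ z)‖ = ‖z‖ ^ ((δ:ℕ):ℝ) * ‖(1:ℂ) + ζ z‖ := by
      rw [norm_mul, norm_pow, Real.rpow_natCast]
    have hn2 : ‖b * z ^ γ * w * (1 + η (z, w))‖
        = ‖b‖ * ‖z‖ ^ ((γ:ℕ):ℝ) * ‖w‖ * ‖(1:ℂ) + η (z, w)‖ := by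
      rw [norm_mul, norm_mul, norm_mul, norm_pow, Real.rpow_natCast]
    rw [hn1, hn2]
    have hxγ : 0 < ‖z‖ ^ ((γ:ℕ):ℝ) := Real.rpow_pos_of_pos hxpos _
    have hδl : 0 < ‖z‖ ^ ((δ:ℝ) * l1) := Real.rpow_pos_of_pos hxpos _
    have hδl2 : 0 < ‖z‖ ^ ((δ:ℝ) * (l1 + l2)) := Real.rpow_pos_of_pos hxpos _
    have hxe0 : (0:ℝ) ≤ ‖z‖ ^ e := (Real.rpow_pos_of_pos hxpos _).le
    have hxl12 : 0 < ‖z‖ ^ (l1 + l2) := Real.rpow_pos_of_pos hxpos _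
    have hrnl2 : 0 < r ^ (-l2) := Real.rpow_pos_of_pos hr _
    have h2l2 : 0 < (2:ℝ) ^ l2 := Real.rpow_pos_of_pos (by norm_num) _
    have h32 : 0 < (3/2:ℝ) ^ (l1 + l2) := Real.rpow_pos_of_pos (by norm_num) _
    constructor
    · -- lower bound
      have hpow2 : (‖z‖ ^ ((δ:ℕ):ℝ) * ‖(1:ℂ) + ζ z‖) ^ (l1 + l2)
          = ‖z‖ ^ ((δ:ℝ) * (l1 + l2)) * ‖(1:ℂ) + ζ z‖ ^ (l1 + l2) := by
        rw [Real.mul_rpow (Real.rpow_nonneg hxpos.le _) hu0, ← Real.rpow_mul hxpos.le]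
      have hhalfneg : ((r/2 : ℝ)) ^ (-l2) = (2:ℝ) ^ l2 * r ^ (-l2) := by
        rw [Real.rpow_neg (by linarith : (0:ℝ) ≤ r/2), Real.rpow_neg hr.le,
          Real.div_rpow hr.le (by norm_num : (0:ℝ) ≤ 2), inv_div, div_eq_mul_inv]
      have core2 : (2:ℝ) ^ l2 * (3/2:ℝ) ^ (l1 + l2) * ‖z‖ ^ e ≤ ‖b‖ * (1/2) := by
        have heq : (2:ℝ) ^ l2 * (3/2:ℝ) ^ (l1 + l2) * c2 = ‖b‖ * (1/2) := by
          rw [hc2def]; field_simp [hnb.ne']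
        have fact := mul_le_mul_of_nonneg_left hxe (mul_pos h2l2 h32).le
        linarith only [heq, fact]
      have huls : ‖(1:ℂ) + ζ z‖ ^ (l1 + l2) ≤ (3/2:ℝ) ^ (l1 + l2) :=
        Real.rpow_le_rpow hu0 hu1 (by linarith)
      have hxsplit2 : ‖z‖ ^ ((δ:ℝ) * (l1 + l2)) = ‖z‖ ^ e * ‖z‖ ^ ((γ:ℝ) + l1 + l2) := by
        rw [hid2, Real.rpow_add hxpos]
      have hxsplit3 : ‖z‖ ^ ((γ:ℝ) + l1 + l2) = ‖z‖ ^ ((γ:ℕ):ℝ) * ‖z‖ ^ (l1 + l2) := by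
        rw [show (γ:ℝ) + l1 + l2 = (γ:ℝ) + (l1 + l2) by ring, Real.rpow_add hxpos]
      calc (r/2) ^ (-l2) * (‖z‖ ^ ((δ:ℕ):ℝ) * ‖(1:ℂ) + ζ z‖) ^ (l1 + l2)
          = (2:ℝ) ^ l2 * ‖(1:ℂ) + ζ z‖ ^ (l1 + l2) * ‖z‖ ^ e
            * (r ^ (-l2) * (‖z‖ ^ ((γ:ℕ):ℝ) * ‖z‖ ^ (l1 + l2))) := by
            rw [hpow2, hhalfneg, hxsplit2, hxsplit3]; ring
        _ ≤ (2:ℝ) ^ l2 * (3/2:ℝ) ^ (l1 + l2) * ‖z‖ ^ e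
            * (r ^ (-l2) * (‖z‖ ^ ((γ:ℕ):ℝ) * ‖z‖ ^ (l1 + l2))) := by
            apply mul_le_mul_of_nonneg_right _
              (mul_nonneg hrnl2.le (mul_nonneg hxγ.le hxl12.le))
            exact mul_le_mul_of_nonneg_right
              (mul_le_mul_of_nonneg_left huls h2l2.le) hxe0
        _ ≤ (‖b‖ * (1/2)) * (r ^ (-l2) * (‖z‖ ^ ((γ:ℕ):ℝ) * ‖z‖ ^ (l1 + l2))) := by
            exact mul_le_mul_of_nonneg_right core2
              (mul_nonneg hrnl2.le (mul_nonneg hxγ.le hxl12.le))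
        _ = ‖b‖ * ‖z‖ ^ ((γ:ℕ):ℝ) * (1/2) * (r ^ (-l2) * ‖z‖ ^ (l1 + l2)) := by ring
        _ < ‖b‖ * ‖z‖ ^ ((γ:ℕ):ℝ) * (1/2) * ‖w‖ :=
            mul_lt_mul_of_pos_left hlow (mul_pos (mul_pos hnb hxγ) (by norm_num))
        _ ≤ ‖b‖ * ‖z‖ ^ ((γ:ℕ):ℝ) * ‖w‖ * ‖(1:ℂ) + η (z, w)‖ := by
            have h := mul_le_mul_of_nonneg_left hv2
              (mul_nonneg (mul_nonneg hnb.le hxγ.le) hy0)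
            linarith only [h]
    · -- upper bound
      have hpow1 : (‖z‖ ^ ((δ:ℕ):ℝ) * ‖(1:ℂ) + ζ z‖) ^ l1
          = ‖z‖ ^ ((δ:ℝ) * l1) * ‖(1:ℂ) + ζ z‖ ^ l1 := by
        rw [Real.mul_rpow (Real.rpow_nonneg hxpos.le _) hu0, ← Real.rpow_mul hxpos.le]
      have core1 : (3/2:ℝ) * ‖b‖ * ‖z‖ ^ γt ≤ (1/2:ℝ) ^ (l1 + 1) := by
        have heq : (3/2:ℝ) * ‖b‖ * c1 = (1/2:ℝ) ^ (l1 + 1) := by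
          have habs : ‖b‖ ≠ 0 := by simpa using hnb.ne'
          rw [hc1def]; field_simp [habs]
        have fact := mul_le_mul_of_nonneg_left hxγt (mul_pos (by norm_num : (0:ℝ) < 3/2) hnb).le
        linarith only [heq, fact]
      have hhalf : (1/2:ℝ) ^ (l1 + 1) = (1/2:ℝ) ^ l1 * (1/2) := by
        rw [Real.rpow_add (by norm_num : (0:ℝ) < 1/2), Real.rpow_one]
      have hul : (1/2:ℝ) ^ l1 ≤ ‖(1:ℂ) + ζ z‖ ^ l1 :=
        Real.rpow_le_rpow (by norm_num) hu2 hl1.le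
      have hLHS : ‖b‖ * ‖z‖ ^ ((γ:ℕ):ℝ) * (r * ‖z‖ ^ l1) * (3/2)
          = r * ((3/2) * ‖b‖ * ‖z‖ ^ γt * ‖z‖ ^ ((δ:ℝ) * l1)) := by
        rw [show (3/2:ℝ) * ‖b‖ * ‖z‖ ^ γt * ‖z‖ ^ ((δ:ℝ) * l1)
            = (3/2) * ‖b‖ * (‖z‖ ^ γt * ‖z‖ ^ ((δ:ℝ) * l1)) by ring,
          ← Real.rpow_add hxpos, ← hid1, Real.rpow_add hxpos]
        ring
      calc ‖b‖ * ‖z‖ ^ ((γ:ℕ):ℝ) * ‖w‖ * ‖(1:ℂ) + η (z, w)‖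
          ≤ ‖b‖ * ‖z‖ ^ ((γ:ℕ):ℝ) * ‖w‖ * (3/2) :=
            mul_le_mul_of_nonneg_left hv1 (mul_nonneg (mul_nonneg hnb.le hxγ.le) hy0)
        _ < ‖b‖ * ‖z‖ ^ ((γ:ℕ):ℝ) * (r * ‖z‖ ^ l1) * (3/2) := by
            have h := mul_lt_mul_of_pos_left hup (mul_pos hnb hxγ)
            linarith only [h]
        _ = r * ((3/2) * ‖b‖ * ‖z‖ ^ γt * ‖z‖ ^ ((δ:ℝ) * l1)) := hLHS
        _ ≤ r * ((1/2:ℝ) ^ (l1 + 1) * ‖z‖ ^ ((δ:ℝ) * l1)) := by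
            apply mul_le_mul_of_nonneg_left _ hr.le
            exact mul_le_mul_of_nonneg_right core1 hδl.le
        _ = r/2 * (‖z‖ ^ ((δ:ℝ) * l1) * (1/2:ℝ) ^ l1) := by rw [hhalf]; ring
        _ ≤ r/2 * (‖z‖ ^ ((δ:ℝ) * l1) * ‖(1:ℂ) + ζ z‖ ^ l1) := by
            apply mul_le_mul_of_nonneg_left
              (mul_le_mul_of_nonneg_left hul hδl.le) (by linarith)
        _ = r/2 * (‖z‖ ^ ((δ:ℕ):ℝ) * ‖(1:ℂ) + ζ z‖) ^ l1 := by rw [hpow1]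
  intro r hr hrle n
  induction n with
  | zero =>
    intro p hp
    simpa using hp
  | succ n ih =>
    intro p hp
    have h1' := ih p hp
    have hpos : 0 < r / 2 ^ n := by positivity
    have hle : r / 2 ^ n ≤ r0 := by
      have : r / 2 ^ n ≤ r := div_le_self hr.le (one_le_pow₀ (by norm_num))
      exact this.trans hrle
    have h2' := hstep _ hpos hle _ h1'
    rw [Function.iterate_succ_apply']
    have heq : r / 2 ^ (n + 1) = (r / 2 ^ n) / 2 := by rw [pow_succ]; ring
    rw [heq]
    exact h2'
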